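/- Let p be a prime, s ≥ 2, and H ∈ BH(n, p^s). Let Φ : ℤ_{p^s} → (ℤ_p)^{p^{s-1}} be the generalized Gray map, and let L(H^Φ) be the entrywise application of Φ to the vertically stacked matrix [L(H); L(H)+J; L(H)+2J; ...; L(H)+(p^{s-1}-1)J], where J is the all-ones matrix. Then the corresponding matrix H^Φ with entries ζ_p^{L(H^Φ)_{ij}} is a Butson Hadamard matrix BH(n·p^{s-1}, p). -/

import Mathlib

/-- The `j`-th base-`p` digit of `x`, as an element of `ℤ_p`. -/
def digitZ (p x j : ℕ) : ZMod p := ((x / p ^ j) % p : ℕ)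

/-- Logarithmic form of the matrix `D = [ζ_p^{v·wᵀ}]_{v,w ∈ (ℤ_p)^{s-1}}`:
the entry in row `b` and column `w` (rows and columns indexed by
`0,…,p^{s-1}-1` via the base-`p` digit vectors) is the standard inner product
mod `p` of the digit vectors of `b` and `w`. -/
def LDrow (p s b w : ℕ) : ZMod p :=
  ∑ j ∈ Finset.range (s - 1), digitZ p b j * digitZ p w j

/-- The generalized Gray map `Φ : ℤ_{p^s} → (ℤ_p)^{p^{s-1}}`,
`Φ(a·p^{s-1} + b) = [L(D)]_b + a·𝟙`. -/
def grayMap (p s : ℕ) (x : ZMod (p ^ s)) (i : Fin (p ^ (s - 1))) : ZMod p :=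
  LDrow p s (x.val % p ^ (s - 1)) i.val + ((x.val / p ^ (s - 1) : ℕ) : ZMod p)

set_option linter.unusedSectionVars false
open Complex Polynomial Finset


lemma pow_mod_one {x : ℂ} {M : ℕ} (h : x ^ M = 1) (k : ℕ) : x ^ k = x ^ (k % M) := by
  conv_lhs => rw [← Nat.div_add_mod k M]
  rw [pow_add, pow_mul, h, one_pow, one_mul]

lemma pow_congr_one {x : ℂ} {M : ℕ} (h : x ^ M = 1) {j k : ℕ}
    (hjk : j % M = k % M) : x ^ j = x ^ k := by
  rw [pow_mod_one h j, pow_mod_one h k, hjk]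

lemma galois_sum_zero {M : ℕ} (hM : M ≠ 0) {ι : Type*} (F : Finset ι) (g : ι → ℕ)
    (u : ℕ) (hu : Nat.Coprime u M)
    (h0 : ∑ j ∈ F, Complex.exp (2 * Real.pi * Complex.I / M) ^ (g j) = 0) :
    ∑ j ∈ F, Complex.exp (2 * Real.pi * Complex.I / M) ^ (u * g j) = 0 := by
  set ζ := Complex.exp (2 * Real.pi * Complex.I / M) with hζdef
  have hζ : IsPrimitiveRoot ζ M := Complex.isPrimitiveRoot_exp M hM
  have hξ : IsPrimitiveRoot (ζ ^ u) M := hζ.pow_of_coprime u hu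
  set f : Polynomial ℚ := ∑ j ∈ F, X ^ (g j) with hf
  have hfζ : aeval ζ f = 0 := by
    rw [hf, map_sum]
    simpa using h0
  have hdvd : minpoly ℚ ζ ∣ f := minpoly.dvd ℚ ζ hfζ
  have hmin : minpoly ℚ ζ = cyclotomic M ℚ :=
    (Polynomial.cyclotomic_eq_minpoly_rat hζ (Nat.pos_of_ne_zero hM)).symm
  have hminξ : minpoly ℚ (ζ ^ u) = cyclotomic M ℚ :=
    (Polynomial.cyclotomic_eq_minpoly_rat hξ (Nat.pos_of_ne_zero hM)).symm
  have hfξ : aeval (ζ ^ u) f = 0 := by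
    obtain ⟨q, hq⟩ := hdvd
    rw [hq, map_mul, hmin, ← hminξ, minpoly.aeval, zero_mul]
  rw [hf, map_sum] at hfξ
  simpa [pow_mul, mul_comm] using hfξ

lemma mod_pow_eq_sum_digits (p : ℕ) (b k : ℕ) :
    b % p ^ k = ∑ i ∈ Finset.range k, (b / p ^ i % p) * p ^ i := by
  induction k with
  | zero => simp [Nat.mod_one]
  | succ k ih =>
    rw [Finset.sum_range_succ, ← ih, pow_succ, Nat.mod_mul]
    ring

lemma eZ_add {M : ℕ} [NeZero M] {x : ℂ} (hx : x ^ M = 1) (a b : ZMod M) :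
    x ^ (a + b).val = x ^ a.val * x ^ b.val := by
  rw [← pow_add]
  exact pow_congr_one hx (by rw [ZMod.val_add, Nat.mod_mod_of_dvd _ dvd_rfl])

lemma eZ_sum {M : ℕ} [NeZero M] {x : ℂ} (hx : x ^ M = 1) {ι : Type*} (F : Finset ι)
    (f : ι → ZMod M) : x ^ (∑ j ∈ F, f j).val = ∏ j ∈ F, x ^ (f j).val := by
  classical
  induction F using Finset.cons_induction with
  | empty => simp
  | cons a F ha ih => rw [Finset.sum_cons, Finset.prod_cons, eZ_add hx, ih]

lemma eZ_mul_conj {M : ℕ} [NeZero M] {x : ℂ} (hx : x ^ M = 1) (hx0 : x ≠ 0) (a b : ZMod M) :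
    x ^ a.val * (starRingEnd ℂ) (x ^ b.val) = x ^ (a - b).val := by
  have habs : ‖x‖ = 1 := by
    have hp : ‖x‖ ^ M = 1 := by rw [← norm_pow, hx, norm_one]
    rcases lt_trichotomy (‖x‖) 1 with h | h | h
    · have := pow_lt_one₀ (norm_nonneg x) h (NeZero.ne M); exact absurd hp (by linarith)
    · exact h
    · have := one_lt_pow₀ h (NeZero.ne M); exact absurd hp (by linarith)
  have hconj : (starRingEnd ℂ) x = x⁻¹ := by
    refine eq_inv_of_mul_eq_one_left ?_
    have := Complex.mul_conj x
    rw [mul_comm] at this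
    rw [this, ← Complex.sq_norm, habs]
    norm_num
  rw [map_pow, hconj, inv_pow]
  have key : x ^ (a - b).val * x ^ b.val = x ^ a.val := by
    rw [← eZ_add hx, sub_add_cancel]
  field_simp [pow_ne_zero _ hx0, ← key]
  rw [← key]; ring

lemma zmod_sum_fin {p : ℕ} [NeZero p] (f : ZMod p → ℂ) :
    ∑ d : Fin p, f ((d : ℕ) : ZMod p) = ∑ v : ZMod p, f v := by
  apply Fintype.sum_bijective (fun d : Fin p => ((d : ℕ) : ZMod p)) ?_ _ _ (fun _ => rfl)
  rw [Fintype.bijective_iff_injective_and_card]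
  refine ⟨fun a b h => ?_, by simp [ZMod.card]⟩
  have := congrArg ZMod.val h
  rwa [ZMod.val_cast_of_lt a.isLt, ZMod.val_cast_of_lt b.isLt, ← Fin.ext_iff] at this

lemma sum_zmod_val_pow {p : ℕ} [Fact p.Prime] {x : ℂ} (hprim : IsPrimitiveRoot x p) :
    ∑ v : ZMod p, x ^ v.val = 0 := by
  rw [← zmod_sum_fin (fun v => x ^ v.val)]
  have : ∀ d : Fin p, x ^ (((d : ℕ) : ZMod p)).val = x ^ (d : ℕ) := by
    intro d; rw [ZMod.val_cast_of_lt d.isLt]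
  rw [Fintype.sum_congr _ _ this, Fin.sum_univ_eq_sum_range]
  exact hprim.geom_sum_eq_zero (Fact.out : p.Prime).one_lt

lemma sum_zmod_mul_pow {p : ℕ} [Fact p.Prime] {x : ℂ} (hprim : IsPrimitiveRoot x p)
    (c : ZMod p) :
    ∑ v : ZMod p, x ^ (c * v).val = if c = 0 then (p : ℂ) else 0 := by
  split_ifs with hc
  · subst hc; simp [ZMod.card]
  · have h := Equiv.sum_comp (Equiv.mulLeft₀ c hc) (fun v : ZMod p => x ^ v.val)
    simp only [Equiv.mulLeft₀_apply] at h
    exact h.trans (sum_zmod_val_pow hprim)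
lemma char_sum (p m : ℕ) [Fact p.Prime] {x : ℂ} (hprim : IsPrimitiveRoot x p)
    (c : Fin m → ZMod p) :
    ∑ t : Fin (p ^ m), x ^ (∑ k : Fin m, c k * digitZ p (t : ℕ) (k : ℕ)).val
      = if ∀ k, c k = 0 then ((p : ℕ) ^ m : ℂ) else 0 := by
  haveI : NeZero p := ⟨(Fact.out : p.Prime).ne_zero⟩
  have hx : x ^ p = 1 := hprim.pow_eq_one
  have hdig : ∀ (D : Fin m → Fin p) (k : Fin m),
      digitZ p ((finFunctionFinEquiv D : Fin (p ^ m)) : ℕ) (k : ℕ) = ((D k : ℕ) : ZMod p) := by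
    intro D k
    have h1 : finFunctionFinEquiv.symm (finFunctionFinEquiv D) = D :=
      Equiv.symm_apply_apply _ _
    have h2 := congrFun h1 k
    rw [Fin.ext_iff] at h2
    simp only [finFunctionFinEquiv_symm_apply_val] at h2
    unfold digitZ
    rw [h2]
  rw [← Equiv.sum_comp finFunctionFinEquiv
    (fun t : Fin (p ^ m) => x ^ (∑ k : Fin m, c k * digitZ p (t : ℕ) (k : ℕ)).val)]
  have hsummand : ∀ D : Fin m → Fin p,
      x ^ (∑ k : Fin m, c k * digitZ p ((finFunctionFinEquiv D : Fin (p ^ m)) : ℕ) (k : ℕ)).val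
        = ∏ k : Fin m, x ^ (c k * ((D k : ℕ) : ZMod p)).val := by
    intro D
    rw [show (∑ k : Fin m, c k * digitZ p ((finFunctionFinEquiv D : Fin (p ^ m)) : ℕ) (k : ℕ))
        = ∑ k : Fin m, c k * ((D k : ℕ) : ZMod p) from
      Finset.sum_congr rfl (fun k _ => by rw [hdig D k]), eZ_sum hx]
  rw [Fintype.sum_congr _ _ hsummand]
  rw [show (univ : Finset (Fin m → Fin p)) = Fintype.piFinset (fun _ => univ) from
    (Fintype.piFinset_univ).symm]
  rw [Finset.sum_prod_piFinset univ (fun (k : Fin m) (d : Fin p) => x ^ (c k * ((d : ℕ) : ZMod p)).val)]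
  have hfac : ∀ k : Fin m, ∑ d : Fin p, x ^ (c k * ((d : ℕ) : ZMod p)).val
      = if c k = 0 then (p : ℂ) else 0 := by
    intro k
    exact (zmod_sum_fin (fun v => x ^ (c k * v).val)).trans (sum_zmod_mul_pow hprim (c k))
  rw [Finset.prod_congr rfl (fun k _ => hfac k)]
  split_ifs with h
  · rw [Finset.prod_congr rfl (fun k _ => if_pos (h k))]
    simp
  · push_neg at h
    obtain ⟨k, hk⟩ := h
    exact Finset.prod_eq_zero (Finset.mem_univ k) (if_neg hk)
lemma digits_eq_iff {p : ℕ} [Fact p.Prime] (m : ℕ) {a b : ℕ} (ha : a < p ^ m) (hb : b < p ^ m) :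
    (∀ k : Fin m, digitZ p a (k : ℕ) = digitZ p b (k : ℕ)) ↔ a = b := by
  have hp : p.Prime := Fact.out
  constructor
  · intro h
    have hd : ∀ k : Fin m, a / p ^ (k : ℕ) % p = b / p ^ (k : ℕ) % p := by
      intro k
      have := congrArg ZMod.val (h k)
      rwa [digitZ, digitZ, ZMod.val_cast_of_lt (Nat.mod_lt _ hp.pos),
        ZMod.val_cast_of_lt (Nat.mod_lt _ hp.pos)] at this
    calc a = a % p ^ m := (Nat.mod_eq_of_lt ha).symm
      _ = ∑ i ∈ Finset.range m, (a / p ^ i % p) * p ^ i := mod_pow_eq_sum_digits p a m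
      _ = ∑ i ∈ Finset.range m, (b / p ^ i % p) * p ^ i := by
          refine Finset.sum_congr rfl fun i hi => ?_
          rw [hd ⟨i, Finset.mem_range.mp hi⟩]
      _ = b % p ^ m := (mod_pow_eq_sum_digits p b m).symm
      _ = b := Nat.mod_eq_of_lt hb
  · rintro rfl _; rfl

section modkey
variable {p s : ℕ} [Fact p.Prime]

lemma val_sub_modeq (x y : ZMod (p ^ s)) [NeZero (p ^ s)] :
    (x - y).val + y.val ≡ x.val [MOD p ^ s] := by
  have h : (x - y) + y = x := sub_add_cancel x y
  have := congrArg ZMod.val h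
  rw [ZMod.val_add] at this
  unfold Nat.ModEq
  rw [← this, Nat.mod_mod_of_dvd _ dvd_rfl]

lemma mod_eq_iff_dvd_sub_val (hs : 1 ≤ s) (x y : ZMod (p ^ s)) [NeZero (p ^ s)] :
    x.val % p ^ (s - 1) = y.val % p ^ (s - 1) ↔ p ^ (s - 1) ∣ (x - y).val := by
  have hPM : p ^ (s - 1) ∣ p ^ s := pow_dvd_pow p (by omega)
  have hP := (val_sub_modeq x y).of_dvd hPM
  constructor
  · intro h
    have h2 : (x - y).val + y.val ≡ 0 + y.val [MOD p ^ (s - 1)] := by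
      calc (x - y).val + y.val ≡ x.val [MOD p ^ (s-1)] := hP
        _ ≡ y.val [MOD p ^ (s-1)] := h
        _ = 0 + y.val := (zero_add _).symm
    exact (Nat.modEq_zero_iff_dvd).1 (h2.add_right_cancel' _)
  · intro h
    have h0 : (x - y).val ≡ 0 [MOD p ^ (s - 1)] := (Nat.modEq_zero_iff_dvd).2 h
    have : y.val ≡ x.val [MOD p ^ (s - 1)] := by
      calc y.val = 0 + y.val := (zero_add _).symm
        _ ≡ (x - y).val + y.val [MOD p ^ (s-1)] := (h0.symm.add_right _)
        _ ≡ x.val [MOD p ^ (s-1)] := hP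
    exact this.symm
end modkey

lemma pow_gray_exp {p s : ℕ} [Fact p.Prime] (hs : 1 ≤ s) [NeZero (p ^ s)] [NeZero p]
    {x y : ZMod (p ^ s)} (hd : p ^ (s - 1) ∣ (x - y).val) {ζ : ℂ} (hζ : ζ ^ (p ^ s) = 1) :
    ζ ^ (p ^ (s - 1) * ((((x.val / p ^ (s - 1) : ℕ) : ZMod p)
        - ((y.val / p ^ (s - 1) : ℕ) : ZMod p)).val)) = ζ ^ (x - y).val := by
  have hp : p.Prime := Fact.out
  set P := p ^ (s - 1) with hPdef
  have hM : p ^ s = P * p := by rw [hPdef, ← pow_succ]; congr 1; omega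
  have hP0 : 0 < P := Nat.pow_pos hp.pos
  have hb : x.val % P = y.val % P := (mod_eq_iff_dvd_sub_val hs x y).2 hd
  obtain ⟨d, hdd⟩ := hd
  have hcong := val_sub_modeq x y
  -- P*d + (P*ay + by) ≡ P*ax + bx [MOD P*p]
  have hxsplit : x.val = P * (x.val / P) + x.val % P := (Nat.div_add_mod _ _).symm
  have hysplit : y.val = P * (y.val / P) + y.val % P := (Nat.div_add_mod _ _).symm
  have hcong2 : P * (d + y.val / P) ≡ P * (x.val / P) [MOD P * p] := by
    have h10 : P * d + y.val ≡ x.val [MOD p ^ s] := by rw [← hdd]; exact hcong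
    have h1 : P * d + y.val ≡ x.val [MOD P * p] := by rw [← hM]; exact h10
    have h2 : P * d + (P * (y.val / P) + y.val % P) ≡ P * (x.val / P) + x.val % P [MOD P * p] := by
      rw [← hysplit, ← hxsplit]; exact h1
    rw [hb] at h2
    have h3 : P * (d + y.val / P) + y.val % P ≡ P * (x.val / P) + y.val % P [MOD P * p] := by
      rw [mul_add, add_assoc]; exact h2
    exact h3.add_right_cancel' _
  have hcong3 : d + y.val / P ≡ x.val / P [MOD p] := Nat.ModEq.mul_left_cancel' hP0.ne' hcong2
  -- (d : ZMod p) = ax - ay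
  have hcast : ((d : ℕ) : ZMod p) = ((x.val / P : ℕ) : ZMod p) - ((y.val / P : ℕ) : ZMod p) := by
    have := (ZMod.natCast_eq_natCast_iff _ _ _).2 hcong3
    push_cast at this
    linear_combination this
  -- exponent congruence: P * ((d : ZMod p)).val ≡ P * d [MOD P * p]
  apply pow_congr_one hζ
  rw [hdd, ← hcast, hM]
  have : ((d : ZMod p)).val ≡ d [MOD p] := by
    rw [ZMod.val_natCast]
    exact (Nat.mod_modEq _ _)
  exact (this.mul_left' (c := P))

lemma graySum (p s : ℕ) [Fact p.Prime] (hs1 : 1 ≤ s) (x y : ZMod (p ^ s))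
    {ζp : ℂ} (hprimp : IsPrimitiveRoot ζp p) {ζ : ℂ} (hζM : ζ ^ (p ^ s) = 1) (hζ0 : ζ ≠ 0)
    (hζP : ζ ^ (p ^ (s - 1)) = ζp) :
    ∑ t : Fin (p ^ (s - 1)),
        ζp ^ (grayMap p s x t).val * (starRingEnd ℂ) (ζp ^ (grayMap p s y t).val)
      = if p ^ (s - 1) ∣ (x - y).val then ((p ^ (s - 1) : ℕ) : ℂ) * ζ ^ (x - y).val else 0 := by
  have hp : p.Prime := Fact.out
  haveI : NeZero p := ⟨hp.ne_zero⟩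
  haveI : NeZero (p ^ s) := ⟨pow_ne_zero s hp.ne_zero⟩
  have hζp1 : ζp ^ p = 1 := hprimp.pow_eq_one
  have hζp0 : ζp ≠ 0 := by rw [← hζP]; exact pow_ne_zero _ hζ0
  have hP0 : 0 < p ^ (s - 1) := Nat.pow_pos hp.pos
  set c : ℕ → ZMod p := fun k =>
    digitZ p (x.val % p ^ (s - 1)) k - digitZ p (y.val % p ^ (s - 1)) k with hcdef
  set e : ZMod p := ((x.val / p ^ (s - 1) : ℕ) : ZMod p)
    - ((y.val / p ^ (s - 1) : ℕ) : ZMod p) with hedef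
  have hgray : ∀ t : Fin (p ^ (s - 1)), grayMap p s x t - grayMap p s y t
      = (∑ k : Fin (s - 1), c (k : ℕ) * digitZ p (t : ℕ) (k : ℕ)) + e := by
    intro t
    rw [Fin.sum_univ_eq_sum_range (fun k => c k * digitZ p (t : ℕ) k) (s - 1)]
    simp only [grayMap, LDrow, hcdef, hedef, sub_mul]
    rw [Finset.sum_sub_distrib]
    ring
  have hterm : ∀ t : Fin (p ^ (s - 1)),
      ζp ^ (grayMap p s x t).val * (starRingEnd ℂ) (ζp ^ (grayMap p s y t).val)
        = ζp ^ ((∑ k : Fin (s - 1), c (k : ℕ) * digitZ p (t : ℕ) (k : ℕ)).val) * ζp ^ e.val := by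
    intro t
    rw [eZ_mul_conj hζp1 hζp0, hgray t, eZ_add hζp1]
  rw [Finset.sum_congr rfl (fun t _ => hterm t), ← Finset.sum_mul]
  rw [char_sum p (s - 1) hprimp (fun k => c (k : ℕ))]
  have hcond : (∀ k : Fin (s - 1), c (k : ℕ) = 0) ↔ p ^ (s - 1) ∣ (x - y).val := by
    constructor
    · intro h
      refine (mod_eq_iff_dvd_sub_val hs1 x y).1 ?_
      refine (digits_eq_iff (s - 1) (Nat.mod_lt _ hP0) (Nat.mod_lt _ hP0)).1 (fun k => ?_)
      have := h k
      rw [hcdef] at this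
      exact sub_eq_zero.1 this
    · intro h k
      have hb := (mod_eq_iff_dvd_sub_val hs1 x y).2 h
      rw [hcdef]
      simp only [hb, sub_self]
  by_cases hd : p ^ (s - 1) ∣ (x - y).val
  · rw [if_pos (hcond.2 hd), if_pos hd]
    congr 1
    · push_cast
      ring
    · rw [hedef, ← hζP, ← pow_mul]
      exact pow_gray_exp hs1 hd hζM
  · rw [if_neg (fun h => hd (hcond.1 h)), if_neg hd, zero_mul]

open Matrix

/-- A Butson Hadamard matrix `BH(card I, k)`. -/
def IsButson {I : Type*} [Fintype I] [DecidableEq I] (k : ℕ) (H : Matrix I I ℂ) : Prop :=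
  (∀ i j : I, H i j ^ k = 1) ∧
    H * H.conjTranspose = (Fintype.card I : ℂ) • (1 : Matrix I I ℂ)

/-- If `H ∈ BH(n, p^s)` and `L(H^Φ)` is the entrywise application of the
generalized Gray map `Φ` to the stacked matrix
`[L(H); L(H)+J; …; L(H)+(p^{s-1}-1)J]`, then the corresponding matrix
`H^Φ = [ζ_p^{L(H^Φ)}]` is a Butson Hadamard matrix `BH(n·p^{s-1}, p)`.
Rows are indexed by pairs `(r,i)` (block `r`, original row `i`) and columns
by pairs `(t,j)` (original column `j`, Gray coordinate `t`). -/
theorem gray_image_butson (p s n : ℕ) [Fact p.Prime] (hs : 2 ≤ s)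
    (L : Matrix (Fin n) (Fin n) (ZMod (p ^ s)))
    (H : Matrix (Fin n) (Fin n) ℂ)
    (hH : ∀ i j, H i j = Complex.exp (2 * Real.pi * Complex.I * (L i j).val / (p ^ s)))
    (hBH : IsButson (p ^ s) H)
    (Hphi : Matrix (Fin (p ^ (s - 1)) × Fin n) (Fin (p ^ (s - 1)) × Fin n) ℂ)
    (hHphi : ∀ (r t : Fin (p ^ (s - 1))) (i j : Fin n),
      Hphi (r, i) (t, j) = Complex.exp (2 * Real.pi * Complex.I *
        (grayMap p s (L i j + ((r.val : ℕ) : ZMod (p ^ s))) t).val / p)) :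
    IsButson p Hphi := by
  classical
  have hp : p.Prime := Fact.out
  haveI : NeZero p := ⟨hp.ne_zero⟩
  haveI : NeZero (p ^ s) := ⟨pow_ne_zero s hp.ne_zero⟩
  have hs1 : 1 ≤ s := by omega
  have hM : p ^ s = p ^ (s - 1) * p := by rw [← pow_succ]; congr 1; omega
  have hP0 : 0 < p ^ (s - 1) := Nat.pow_pos hp.pos
  set ζ : ℂ := Complex.exp (2 * Real.pi * Complex.I / ((p ^ s : ℕ) : ℂ)) with hζdef
  set ζp : ℂ := Complex.exp (2 * Real.pi * Complex.I / ((p : ℕ) : ℂ)) with hζpdef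
  have hprimζ : IsPrimitiveRoot ζ (p ^ s) :=
    Complex.isPrimitiveRoot_exp _ (pow_ne_zero s hp.ne_zero)
  have hprimp : IsPrimitiveRoot ζp p := Complex.isPrimitiveRoot_exp _ hp.ne_zero
  have hζM : ζ ^ (p ^ s) = 1 := hprimζ.pow_eq_one
  have hζp1 : ζp ^ p = 1 := hprimp.pow_eq_one
  have hζ0 : ζ ≠ 0 := Complex.exp_ne_zero _
  have hζp0 : ζp ≠ 0 := Complex.exp_ne_zero _
  have hexpP : ∀ v : ℕ, Complex.exp (2 * Real.pi * Complex.I * v / (p : ℂ)) = ζp ^ v := by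
    intro v
    rw [hζpdef, ← Complex.exp_nat_mul]
    congr 1
    push_cast
    ring
  have hexpM : ∀ v : ℕ, Complex.exp (2 * Real.pi * Complex.I * v / (p : ℂ) ^ s) = ζ ^ v := by
    intro v
    rw [hζdef, ← Complex.exp_nat_mul]
    congr 1
    push_cast
    ring
  have hζP : ζ ^ (p ^ (s - 1)) = ζp := by
    rw [hζdef, hζpdef, ← Complex.exp_nat_mul]
    congr 1
    have hcast : ((p ^ s : ℕ) : ℂ) = ((p ^ (s - 1) : ℕ) : ℂ) * (p : ℂ) := by
      rw [hM]; push_cast; ring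
    have hPC : ((p ^ (s - 1) : ℕ) : ℂ) ≠ 0 := Nat.cast_ne_zero.2 hP0.ne'
    have hpC : ((p : ℕ) : ℂ) ≠ 0 := Nat.cast_ne_zero.2 hp.ne_zero
    rw [hcast]
    field_simp
  constructor
  · rintro ⟨r, i⟩ ⟨t, j⟩
    rw [hHphi r t i j, hexpP, ← pow_mul, mul_comm, pow_mul, hζp1, one_pow]
  · ext ⟨r, i⟩ ⟨r', i'⟩
    rw [Matrix.mul_apply, Matrix.smul_apply, Matrix.one_apply]
    simp only [Matrix.conjTranspose_apply, Complex.star_def]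
    rw [Fintype.sum_prod_type, Finset.sum_comm]
    set z : Fin n → ZMod (p ^ s) := fun j =>
      (L i j + ((r.val : ℕ) : ZMod (p ^ s))) - (L i' j + ((r'.val : ℕ) : ZMod (p ^ s)))
      with hzdef
    have hinner : ∀ j : Fin n,
        (∑ t : Fin (p ^ (s - 1)), Hphi (r, i) (t, j) * (starRingEnd ℂ) (Hphi (r', i') (t, j)))
          = if p ^ (s - 1) ∣ (z j).val then ((p ^ (s - 1) : ℕ) : ℂ) * ζ ^ (z j).val else 0 := by
      intro j
      have hent : ∀ t : Fin (p ^ (s - 1)),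
          Hphi (r, i) (t, j) * (starRingEnd ℂ) (Hphi (r', i') (t, j))
            = ζp ^ (grayMap p s (L i j + ((r.val : ℕ) : ZMod (p ^ s))) t).val
              * (starRingEnd ℂ)
                (ζp ^ (grayMap p s (L i' j + ((r'.val : ℕ) : ZMod (p ^ s))) t).val) := by
        intro t
        rw [hHphi r t i j, hHphi r' t i' j, hexpP, hexpP]
      rw [Finset.sum_congr rfl (fun t _ => hent t)]
      exact graySum p s hs1 _ _ hprimp hζM hζ0 hζP
    rw [Finset.sum_congr rfl (fun j _ => hinner j)]
    by_cases hii : i = i'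
    · subst hii
      by_cases hrr : r = r'
      · subst hrr
        have hz0 : ∀ j, z j = 0 := fun j => by rw [hzdef]; ring
        have hterm : ∀ j : Fin n,
            (if p ^ (s - 1) ∣ (z j).val then ((p ^ (s - 1) : ℕ) : ℂ) * ζ ^ (z j).val else 0)
              = ((p ^ (s - 1) : ℕ) : ℂ) := by
          intro j
          rw [hz0 j]
          simp
        rw [Finset.sum_congr rfl (fun j _ => hterm j), Finset.sum_const, Finset.card_univ,
          Fintype.card_fin, if_pos rfl]
        simp only [Fintype.card_prod, Fintype.card_fin, smul_eq_mul, mul_one]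
        push_cast
        ring
      · have hzz : ∀ j, ¬ (p ^ (s - 1) ∣ (z j).val) := by
          intro j hdvd
          apply hrr
          have hzeq : z j = ((r.val : ℕ) : ZMod (p ^ s)) - ((r'.val : ℕ) : ZMod (p ^ s)) := by
            rw [hzdef]; ring
          rw [hzeq] at hdvd
          have hmod := (mod_eq_iff_dvd_sub_val hs1 _ _).2 hdvd
          have hrlt : r.val < p ^ s := lt_of_lt_of_le r.isLt
            (by rw [hM]; exact Nat.le_mul_of_pos_right _ hp.pos)
          have hrlt' : r'.val < p ^ s := lt_of_lt_of_le r'.isLt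
            (by rw [hM]; exact Nat.le_mul_of_pos_right _ hp.pos)
          rw [ZMod.val_cast_of_lt hrlt, ZMod.val_cast_of_lt hrlt',
            Nat.mod_eq_of_lt r.isLt, Nat.mod_eq_of_lt r'.isLt] at hmod
          exact Fin.ext hmod
        rw [Finset.sum_congr rfl (fun j _ => if_neg (hzz j)), Finset.sum_const_zero,
          if_neg (by simp [hrr])]
        simp
    · -- i ≠ i' : orthogonality via Galois conjugates
      have h2 := congrFun (congrFun hBH.2 i) i'
      rw [Matrix.mul_apply, Matrix.smul_apply, Matrix.one_apply_ne hii, smul_zero] at h2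
      simp only [Matrix.conjTranspose_apply, Complex.star_def] at h2
      have horth : (∑ j : Fin n, ζ ^ ((L i j - L i' j).val)) = 0 := by
        rw [← h2]
        refine Finset.sum_congr rfl (fun j _ => ?_)
        rw [hH i j, hH i' j, hexpM, hexpM, eZ_mul_conj hζM hζ0]
      have hz0 : (∑ j : Fin n, ζ ^ ((z j).val)) = 0 := by
        have hδ : ∀ j : Fin n, ζ ^ ((z j).val)
            = ζ ^ ((L i j - L i' j).val)
              * ζ ^ ((((r.val : ℕ) : ZMod (p ^ s)) - ((r'.val : ℕ) : ZMod (p ^ s))).val) := by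
          intro j
          rw [← eZ_add hζM]
          congr 1
          rw [hzdef]
          ring_nf
        rw [Finset.sum_congr rfl (fun j _ => hδ j), ← Finset.sum_mul, horth, zero_mul]
      have hcop : ∀ c : ℕ, Nat.Coprime (1 + c * p) (p ^ s) := by
        intro c
        apply Nat.Coprime.pow_right
        rw [Nat.coprime_comm]
        refine (hp.coprime_iff_not_dvd).2 (fun hdvd => ?_)
        rw [add_comm] at hdvd
        have h1 := (Nat.dvd_add_right (dvd_mul_left p c)).1 hdvd
        exact hp.one_lt.ne' (Nat.dvd_one.1 h1)
      have hgal : ∀ c : ℕ, (∑ j : Fin n, ζ ^ ((1 + c * p) * (z j).val)) = 0 := by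
        intro c
        refine galois_sum_zero (pow_ne_zero s hp.ne_zero) Finset.univ
          (fun j => (z j).val) (1 + c * p) (hcop c) hz0
      have hsum0 : ∑ j : Fin n, ∑ c ∈ Finset.range (p ^ (s - 1)),
          ζ ^ ((1 + c * p) * (z j).val) = 0 := by
        rw [Finset.sum_comm]
        exact Finset.sum_eq_zero (fun c _ => hgal c)
      have hinner2 : ∀ j : Fin n, (∑ c ∈ Finset.range (p ^ (s - 1)),
          ζ ^ ((1 + c * p) * (z j).val))
            = if p ^ (s - 1) ∣ (z j).val then ((p ^ (s - 1) : ℕ) : ℂ) * ζ ^ (z j).val else 0 := by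
        intro j
        have hterm : ∀ c : ℕ, ζ ^ ((1 + c * p) * (z j).val)
            = ζ ^ ((z j).val) * (ζ ^ (p * (z j).val)) ^ c := by
          intro c
          rw [← pow_mul, ← pow_add]
          congr 1
          ring
        rw [Finset.sum_congr rfl (fun c _ => hterm c), ← Finset.mul_sum]
        by_cases hd : p ^ (s - 1) ∣ (z j).val
        · obtain ⟨m, hm⟩ := hd
          have hω : ζ ^ (p * (z j).val) = 1 := by
            rw [hm, show p * (p ^ (s - 1) * m) = (p ^ s) * m by rw [hM]; ring,
              pow_mul, hζM, one_pow]
          rw [if_pos ⟨m, hm⟩, hω]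
          simp only [one_pow, Finset.sum_const, Finset.card_range, nsmul_eq_mul, mul_one]
          ring
        · have hω1 : ζ ^ (p * (z j).val) ≠ 1 := by
            intro h1
            obtain ⟨m, hm⟩ := (IsPrimitiveRoot.pow_eq_one_iff_dvd hprimζ _).1 h1
            refine hd ⟨m, Nat.eq_of_mul_eq_mul_left hp.pos ?_⟩
            rw [hm, hM]; ring
          have hωP : (ζ ^ (p * (z j).val)) ^ (p ^ (s - 1)) = 1 := by
            rw [← pow_mul, show p * (z j).val * p ^ (s - 1) = p ^ s * (z j).val by
              generalize (z j).val = g; rw [hM]; ring, pow_mul, hζM, one_pow]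
          rw [if_neg hd, geom_sum_eq hω1, hωP]
          simp
      rw [Finset.sum_congr rfl (fun j _ => (hinner2 j).symm), hsum0,
        if_neg (by simp [hii]), smul_zero]
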